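/- Let G be a graph on n vertices containing a Hamilton cycle, such that G is outerplanar (has a planar embedding with all vertices on the outer face) and contains no subgraph isomorphic to the double star S_{2,2}. If n ≥ 6, then the maximum degree of G is at most 3. -/

import Mathlib

open SimpleGraph Finset

/-- `G` contains a copy of the double star `S_{p,q}`: adjacent centers `x, y`,
with `p` leaves attached to `x` and `q` leaves attached to `y`, all distinct. -/
def ContainsDoubleStar {V : Type*} (G : SimpleGraph V) (p q : ℕ) : Prop :=
  ∃ (x y : V) (X Y : Finset V), G.Adj x y ∧ X.card = p ∧ Y.card = q ∧
    Disjoint X Y ∧ y ∉ X ∧ x ∉ Y ∧ (∀ v ∈ X, G.Adj x v) ∧ (∀ v ∈ Y, G.Adj y v)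

/-- A graph is outerplanar iff it admits a one-page book embedding: a linear
ordering of the vertices such that no two edges cross. -/
def IsOuterplanar {V : Type*} (G : SimpleGraph V) : Prop :=
  ∃ σ : V → Fin (Nat.card V), Function.Bijective σ ∧
    ∀ a b c d : V, G.Adj a b → G.Adj c d → ¬ (σ a < σ c ∧ σ c < σ b ∧ σ b < σ d)

namespace DSAux

variable {V : Type*}

lemma pair_eq {a b p q t : V} (hpq : p ≠ q) (hp : p = a ∨ p = b) (hq : q = a ∨ q = b)
    (ht : t = a ∨ t = b) : t = p ∨ t = q := by
  rcases hp with rfl | rfl <;> rcases hq with rfl | rfl <;> tauto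

lemma build_star [DecidableEq V] {G : SimpleGraph V} {v z x1 x2 a b : V}
    (hvz : G.Adj v z) (hx1 : G.Adj v x1) (hx2 : G.Adj v x2) (ha : G.Adj z a) (hb : G.Adj z b)
    (h12 : x1 ≠ x2) (hab : a ≠ b) (hx1z : x1 ≠ z) (hx2z : x2 ≠ z) (hav : a ≠ v) (hbv : b ≠ v)
    (h1a : x1 ≠ a) (h1b : x1 ≠ b) (h2a : x2 ≠ a) (h2b : x2 ≠ b) :
    ContainsDoubleStar G 2 2 := by
  refine ⟨v, z, {x1, x2}, {a, b}, hvz, Finset.card_pair h12, Finset.card_pair hab, ?_, ?_, ?_,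
    ?_, ?_⟩
  · rw [Finset.disjoint_left]
    intro t ht hta
    simp only [Finset.mem_insert, Finset.mem_singleton] at ht hta
    rcases ht with rfl | rfl <;> rcases hta with rfl | rfl <;> tauto
  · simp only [Finset.mem_insert, Finset.mem_singleton]
    push_neg
    exact ⟨Ne.symm hx1z, Ne.symm hx2z⟩
  · simp only [Finset.mem_insert, Finset.mem_singleton]
    push_neg
    exact ⟨Ne.symm hav, Ne.symm hbv⟩
  · intro t ht
    simp only [Finset.mem_insert, Finset.mem_singleton] at ht
    rcases ht with rfl | rfl
    · exact hx1
    · exact hx2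
  · intro t ht
    simp only [Finset.mem_insert, Finset.mem_singleton] at ht
    rcases ht with rfl | rfl
    · exact ha
    · exact hb

lemma path_getVert_inj {G : SimpleGraph V} {u v : V} (p : G.Walk u v) (hp : p.IsPath) :
    ∀ i j, i ≤ p.length → j ≤ p.length → p.getVert i = p.getVert j → i = j := by
  induction p with
  | nil => intro i j hi hj _; simp only [SimpleGraph.Walk.length_nil, Nat.le_zero] at hi hj; omega
  | @cons u x v h q ih =>
    rw [SimpleGraph.Walk.cons_isPath_iff] at hp
    intro i j hi hj hij
    match i, j with
    | 0, 0 => rfl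
    | 0, (j+1) =>
      exfalso
      apply hp.2
      rw [SimpleGraph.Walk.getVert_zero, SimpleGraph.Walk.getVert_cons_succ] at hij
      exact SimpleGraph.Walk.mem_support_iff_exists_getVert.mpr
        ⟨j, hij.symm, by simpa using hj⟩
    | (i+1), 0 =>
      exfalso
      apply hp.2
      rw [SimpleGraph.Walk.getVert_zero, SimpleGraph.Walk.getVert_cons_succ] at hij
      exact SimpleGraph.Walk.mem_support_iff_exists_getVert.mpr
        ⟨i, hij, by simpa using hi⟩
    | (i+1), (j+1) =>
      rw [SimpleGraph.Walk.getVert_cons_succ, SimpleGraph.Walk.getVert_cons_succ] at hij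
      have := ih hp.1 i j (by simpa using hi) (by simpa using hj) hij
      omega

lemma cycle_two_nbrs [Fintype V] [DecidableEq V] {G : SimpleGraph V} {u : V} {c : G.Walk u u}
    (hc : c.IsHamiltonianCycle) (hV : 3 ≤ Fintype.card V) (x : V) :
    ∃ a b : V, a ≠ b ∧ c.toSubgraph.Adj x a ∧ c.toSubgraph.Adj x b ∧
      ∀ z, c.toSubgraph.Adj x z → z = a ∨ z = b := by
  have hnil : ¬ c.Nil := hc.isCycle.not_nil
  have hlen3 : 3 ≤ c.length := by rw [hc.length_eq]; exact hV
  have htail : c.tail.IsPath := hc.isHamiltonian_tail.isPath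
  have hlt : c.tail.length + 1 = c.length := SimpleGraph.Walk.length_tail_add_one hnil
  have hinj : ∀ i j, 1 ≤ i → i ≤ c.length → 1 ≤ j → j ≤ c.length →
      c.getVert i = c.getVert j → i = j := by
    intro i j h1i h2i h1j h2j hij
    have e1 : c.tail.getVert (i-1) = c.getVert i := by
      rw [SimpleGraph.Walk.getVert_tail _]; congr 1; omega
    have e2 : c.tail.getVert (j-1) = c.getVert j := by
      rw [SimpleGraph.Walk.getVert_tail _]; congr 1; omega
    have := path_getVert_inj _ htail (i-1) (j-1) (by omega) (by omega)
      (by rw [e1, e2]; exact hij)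
    omega
  have hg0 : c.getVert 0 = u := SimpleGraph.Walk.getVert_zero c
  have hgn : c.getVert c.length = u := SimpleGraph.Walk.getVert_length c
  obtain ⟨i0, hi0, hi0le⟩ := SimpleGraph.Walk.mem_support_iff_exists_getVert.mp
    (hc.mem_support x)
  set k := if i0 = 0 then c.length else i0 with hkdef
  have hk1 : 1 ≤ k := by rw [hkdef]; split_ifs <;> omega
  have hkn : k ≤ c.length := by rw [hkdef]; split_ifs <;> omega
  have hgk : c.getVert k = x := by
    rw [hkdef]; split_ifs with h
    · rw [hgn, ← hg0, ← h]; exact hi0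
    · exact hi0
  refine ⟨c.getVert (k-1), if k = c.length then c.getVert 1 else c.getVert (k+1), ?_, ?_, ?_, ?_⟩
  · -- a ≠ b
    split_ifs with h
    · intro heq
      have := hinj (k-1) 1 (by omega) (by omega) (by omega) (by omega) heq
      omega
    · intro heq
      rcases Nat.lt_or_ge k 2 with hk2 | hk2
      · have h0 : c.getVert 0 = c.getVert (k+1) := by
          rw [show (0:ℕ) = k - 1 by omega]; exact heq
        have heq' : c.getVert c.length = c.getVert (k+1) := by
          rw [hgn]; exact hg0.symm.trans h0
        have := hinj c.length (k+1) (by omega) (by omega) (by omega) (by omega) heq'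
        omega
      · have := hinj (k-1) (k+1) (by omega) (by omega) (by omega) (by omega) heq
        omega
  · -- Adj x a
    have := SimpleGraph.Walk.toSubgraph_adj_getVert c (i := k - 1) (by omega)
    rw [show k - 1 + 1 = k by omega, hgk] at this
    exact this.symm
  · -- Adj x b
    split_ifs with h
    · have hxu : x = u := by rw [← hgk, h, hgn]
      have := SimpleGraph.Walk.toSubgraph_adj_getVert c (i := 0) (by omega)
      rw [hg0] at this
      simpa [hxu] using this
    · have := SimpleGraph.Walk.toSubgraph_adj_getVert c (i := k) (by omega)
      rw [hgk] at this
      exact this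
  · -- uniqueness
    intro z hz
    rw [SimpleGraph.Walk.toSubgraph_adj_iff] at hz
    obtain ⟨i, hi, hilt⟩ := hz
    rcases Sym2.eq_iff.mp hi with ⟨h1, h2⟩ | ⟨h1, h2⟩
    · rcases Nat.eq_zero_or_pos i with rfl | hpos
      · have hkl : k = c.length := by
          apply hinj k c.length (by omega) (by omega) (by omega) (by omega)
          rw [hgk, hgn]; rw [← h1, SimpleGraph.Walk.getVert_zero]
        right
        rw [if_pos hkl]
        exact h2.symm
      · have hik : i = k := by
          apply hinj i k (by omega) (by omega) (by omega) (by omega)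
          rw [hgk]; exact h1
        right
        rw [if_neg (by omega)]
        rw [← hik]; exact h2.symm
    · have hik : i + 1 = k := by
        apply hinj (i+1) k (by omega) (by omega) (by omega) (by omega)
        rw [hgk]; exact h2
      left
      rw [show k - 1 = i by omega]
      exact h1.symm

lemma closure [Fintype V] [DecidableEq V] {G : SimpleGraph V} {u : V} {c : G.Walk u u}
    (hc : c.IsHamiltonianCycle) (S : Set V)
    (hcl : ∀ x ∈ S, ∀ z, c.toSubgraph.Adj x z → z ∈ S) {x0 : V} (hx0 : x0 ∈ S) :
    ∀ y : V, y ∈ S := by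
  intro y
  have hconn := c.toSubgraph_connected
  have hxv : x0 ∈ c.toSubgraph.verts := by
    rw [SimpleGraph.Walk.verts_toSubgraph]; exact hc.mem_support x0
  have hyv : y ∈ c.toSubgraph.verts := by
    rw [SimpleGraph.Walk.verts_toSubgraph]; exact hc.mem_support y
  obtain ⟨w⟩ := hconn.preconnected ⟨x0, hxv⟩ ⟨y, hyv⟩
  have key : ∀ (p q : c.toSubgraph.verts) (w : (c.toSubgraph.coe).Walk p q),
      (p : V) ∈ S → (q : V) ∈ S := by
    intro p q w'
    induction w' with
    | nil => exact id
    | cons hadj w' ih => exact fun hp => ih (hcl _ hp _ hadj)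
  exact key _ _ w hx0

end DSAux

theorem stmt1 {V : Type*} [Fintype V] [DecidableEq V] (G : SimpleGraph V) [DecidableRel G.Adj]
    (hn : 6 ≤ Fintype.card V)
    (hham : ∃ (u : V) (c : G.Walk u u), c.IsHamiltonianCycle)
    (hop : IsOuterplanar G) (hfree : ¬ ContainsDoubleStar G 2 2) :
    ∀ v : V, G.degree v ≤ 3 := by
  intro v
  by_contra hdeg
  push_neg at hdeg
  obtain ⟨u, c, hc⟩ := hham
  have hV3 : 3 ≤ Fintype.card V := by omega
  have hB : ∀ x : V, ∃ a b : V, a ≠ b ∧ c.toSubgraph.Adj x a ∧ c.toSubgraph.Adj x b ∧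
      ∀ z, c.toSubgraph.Adj x z → z = a ∨ z = b := fun x => DSAux.cycle_two_nbrs hc hV3 x
  obtain ⟨pv, nv, hpn, hCvp, hCvn, hvU⟩ := hB v
  have hN : 4 ≤ (G.neighborFinset v).card := by
    have hdeg' : G.degree v = (G.neighborFinset v).card := rfl
    omega
  have hsd : 2 ≤ ((G.neighborFinset v) \ {pv, nv}).card := by
    have h1 := Finset.card_le_card_sdiff_add_card (s := G.neighborFinset v)
      (t := ({pv, nv} : Finset V))
    have h2 : ({pv, nv} : Finset V).card ≤ 2 :=
      (Finset.card_insert_le _ _).trans (by simp)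
    omega
  obtain ⟨w, hwmem, w', hw'mem, hww'⟩ := Finset.one_lt_card.mp
    (show 1 < ((G.neighborFinset v) \ {pv, nv}).card by omega)
  simp only [Finset.mem_sdiff, SimpleGraph.mem_neighborFinset, Finset.mem_insert,
    Finset.mem_singleton, not_or] at hwmem hw'mem
  obtain ⟨hvw, hwp, hwn⟩ := hwmem
  obtain ⟨hvw', hw'p, hw'n⟩ := hw'mem
  -- key step: for each chord endpoint we either find a double star, collapse the graph,
  -- or the configuration is "bad"
  have key : ∀ z z' : V, G.Adj v z → G.Adj v z' → z ≠ z' → ¬ z = pv → ¬ z = nv →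
      ¬ z' = pv → ¬ z' = nv →
      ∃ α : V, (α = pv ∨ α = nv) ∧ c.toSubgraph.Adj z z' ∧ c.toSubgraph.Adj z α := by
    intro z z' hvz hvz' hzz' hzp hzn hz'p hz'n
    obtain ⟨az, bz, habz, hCza, hCzb, hzU⟩ := hB z
    have hav : az ≠ v := by
      rintro rfl
      rcases hvU z hCza.symm with h | h
      · exact hzp h
      · exact hzn h
    have hbv : bz ≠ v := by
      rintro rfl
      rcases hvU z hCzb.symm with h | h
      · exact hzp h
      · exact hzn h
    by_cases m1 : pv = az ∨ pv = bz
    · by_cases m2 : nv = az ∨ nv = bz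
      · -- the graph collapses to 4 vertices
        exfalso
        have haz : az = pv ∨ az = nv := by
          rcases m1 with h1 | h1 <;> rcases m2 with h2 | h2
          · exact Or.inl h1.symm
          · exact Or.inl h1.symm
          · exact Or.inr h2.symm
          · exact absurd (h1.trans h2.symm) hpn
        have hbz : bz = pv ∨ bz = nv := by
          rcases m1 with h1 | h1 <;> rcases m2 with h2 | h2
          · exact absurd (h1.trans h2.symm) hpn
          · exact Or.inr h2.symm
          · exact Or.inl h1.symm
          · exact Or.inl h1.symm
        have hCzp : c.toSubgraph.Adj z pv := by
          rcases m1 with h | h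
          · rw [h]; exact hCza
          · rw [h]; exact hCzb
        have hCzn : c.toSubgraph.Adj z nv := by
          rcases m2 with h | h
          · rw [h]; exact hCza
          · rw [h]; exact hCzb
        have hvzne : v ≠ z := hvz.ne
        obtain ⟨a1, b1, hab1, _, _, hpU⟩ := hB pv
        obtain ⟨a2, b2, hab2, _, _, hnU⟩ := hB nv
        set S : Set V := {v, z, pv, nv} with hS
        have hcl : ∀ x ∈ S, ∀ t, c.toSubgraph.Adj x t → t ∈ S := by
          intro x hx t ht
          simp only [hS, Set.mem_insert_iff, Set.mem_singleton_iff] at hx ⊢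
          rcases hx with rfl | rfl | rfl | rfl
          · rcases hvU t ht with h | h
            · exact Or.inr (Or.inr (Or.inl h))
            · exact Or.inr (Or.inr (Or.inr h))
          · rcases hzU t ht with rfl | rfl
            · rcases haz with h | h
              · exact Or.inr (Or.inr (Or.inl h))
              · exact Or.inr (Or.inr (Or.inr h))
            · rcases hbz with h | h
              · exact Or.inr (Or.inr (Or.inl h))
              · exact Or.inr (Or.inr (Or.inr h))
          · rcases DSAux.pair_eq hvzne (hpU v hCvp.symm) (hpU z hCzp.symm) (hpU t ht) with h | h
            · exact Or.inl h
            · exact Or.inr (Or.inl h)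
          · rcases DSAux.pair_eq hvzne (hnU v hCvn.symm) (hnU z hCzn.symm) (hnU t ht) with h | h
            · exact Or.inl h
            · exact Or.inr (Or.inl h)
        have hall := DSAux.closure hc S hcl (show v ∈ S from Or.inl rfl)
        have hsub : (Finset.univ : Finset V) ⊆ {v, z, pv, nv} := by
          intro y _
          have hy := hall y
          simp only [hS, Set.mem_insert_iff, Set.mem_singleton_iff] at hy
          simp only [Finset.mem_insert, Finset.mem_singleton]
          exact hy
        have hcard := Finset.card_le_card hsub
        have c1 := Finset.card_insert_le v ({z, pv, nv} : Finset V)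
        have c2 := Finset.card_insert_le z ({pv, nv} : Finset V)
        have c3 := Finset.card_insert_le pv ({nv} : Finset V)
        have c4 : ({nv} : Finset V).card = 1 := Finset.card_singleton nv
        have c5 : Fintype.card V = (Finset.univ : Finset V).card := Finset.card_univ.symm
        omega
      · by_cases m3 : z' = az ∨ z' = bz
        · refine ⟨pv, Or.inl rfl, ?_, ?_⟩
          · rcases m3 with h | h
            · rw [h]; exact hCza
            · rw [h]; exact hCzb
          · rcases m1 with h | h
            · rw [h]; exact hCza
            · rw [h]; exact hCzb
        · exfalso
          push_neg at m2 m3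
          exact hfree (DSAux.build_star hvz hCvn.adj_sub hvz' hCza.adj_sub hCzb.adj_sub
            (Ne.symm hz'n) habz (Ne.symm hzn) (Ne.symm hzz') hav hbv
            m2.1 m2.2 m3.1 m3.2)
    · by_cases m3 : z' = az ∨ z' = bz
      · by_cases m2 : nv = az ∨ nv = bz
        · refine ⟨nv, Or.inr rfl, ?_, ?_⟩
          · rcases m3 with h | h
            · rw [h]; exact hCza
            · rw [h]; exact hCzb
          · rcases m2 with h | h
            · rw [h]; exact hCza
            · rw [h]; exact hCzb
        · exfalso
          push_neg at m1 m2
          exact hfree (DSAux.build_star hvz hCvp.adj_sub hCvn.adj_sub hCza.adj_sub hCzb.adj_sub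
            hpn habz (Ne.symm hzp) (Ne.symm hzn) hav hbv
            m1.1 m1.2 m2.1 m2.2)
      · exfalso
        push_neg at m1 m3
        exact hfree (DSAux.build_star hvz hCvp.adj_sub hvz' hCza.adj_sub hCzb.adj_sub
          (Ne.symm hz'p) habz (Ne.symm hzp) (Ne.symm hzz') hav hbv
          m1.1 m1.2 m3.1 m3.2)
  obtain ⟨α, hα, hCww', hCwα⟩ := key w w' hvw hvw' hww' hwp hwn hw'p hw'n
  obtain ⟨β, hβ, hCw'w, hCw'β⟩ := key w' w hvw' hvw (Ne.symm hww') hw'p hw'n hwp hwn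
  have hvwne : v ≠ w := hvw.ne
  have hvw'ne : v ≠ w' := hvw'.ne
  have hCαv : c.toSubgraph.Adj α v := by
    rcases hα with h | h
    · rw [h]; exact hCvp.symm
    · rw [h]; exact hCvn.symm
  have hCβv : c.toSubgraph.Adj β v := by
    rcases hβ with h | h
    · rw [h]; exact hCvp.symm
    · rw [h]; exact hCvn.symm
  have hw'α : w' ≠ α := by
    rcases hα with h | h <;> rw [h] <;> assumption
  have hwβ : w ≠ β := by
    rcases hβ with h | h <;> rw [h] <;> assumption
  have hαβ : α ≠ β := by
    rintro rfl
    obtain ⟨a0, b0, hab0, _, _, hU0⟩ := hB α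
    have h1 : v = a0 ∨ v = b0 := hU0 v hCαv
    have h2 : w = a0 ∨ w = b0 := hU0 w hCwα.symm
    have h3 : w' = a0 ∨ w' = b0 := hU0 w' hCw'β.symm
    rcases DSAux.pair_eq hvwne h1 h2 h3 with h | h
    · exact hvw'ne h.symm
    · exact hww' h.symm
  obtain ⟨aw, bw, habw, _, _, hwU⟩ := hB w
  obtain ⟨aw', bw', habw', _, _, hw'U⟩ := hB w'
  obtain ⟨aα, bα, habα, _, _, hαU⟩ := hB α
  obtain ⟨aβ, bβ, habβ, _, _, hβU⟩ := hB β
  set S : Set V := {v, α, w, w', β} with hS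
  have hcl : ∀ x ∈ S, ∀ t, c.toSubgraph.Adj x t → t ∈ S := by
    intro x hx t ht
    simp only [hS, Set.mem_insert_iff, Set.mem_singleton_iff] at hx ⊢
    rcases hx with rfl | rfl | rfl | rfl | rfl
    · rcases DSAux.pair_eq hαβ hα hβ (hvU t ht) with h | h
      · exact Or.inr (Or.inl h)
      · exact Or.inr (Or.inr (Or.inr (Or.inr h)))
    · rcases DSAux.pair_eq hvwne (hαU v hCαv) (hαU w hCwα.symm) (hαU t ht) with h | h
      · exact Or.inl h
      · exact Or.inr (Or.inr (Or.inl h))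
    · rcases DSAux.pair_eq hw'α (hwU w' hCww') (hwU α hCwα) (hwU t ht) with h | h
      · exact Or.inr (Or.inr (Or.inr (Or.inl h)))
      · exact Or.inr (Or.inl h)
    · rcases DSAux.pair_eq hwβ (hw'U w hCw'w) (hw'U β hCw'β) (hw'U t ht) with h | h
      · exact Or.inr (Or.inr (Or.inl h))
      · exact Or.inr (Or.inr (Or.inr (Or.inr h)))
    · rcases DSAux.pair_eq hvw'ne (hβU v hCβv) (hβU w' hCw'β.symm) (hβU t ht) with h | h
      · exact Or.inl h
      · exact Or.inr (Or.inr (Or.inr (Or.inl h)))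
  have hall := DSAux.closure hc S hcl (show v ∈ S from Or.inl rfl)
  have hsub : (Finset.univ : Finset V) ⊆ {v, α, w, w', β} := by
    intro y _
    have hy := hall y
    simp only [hS, Set.mem_insert_iff, Set.mem_singleton_iff] at hy
    simp only [Finset.mem_insert, Finset.mem_singleton]
    exact hy
  have hcard := Finset.card_le_card hsub
  have c1 := Finset.card_insert_le v ({α, w, w', β} : Finset V)
  have c2 := Finset.card_insert_le α ({w, w', β} : Finset V)
  have c3 := Finset.card_insert_le w ({w', β} : Finset V)
  have c4 := Finset.card_insert_le w' ({β} : Finset V)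
  have c5 : ({β} : Finset V).card = 1 := Finset.card_singleton β
  have c6 : Fintype.card V = (Finset.univ : Finset V).card := Finset.card_univ.symm
  omega
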